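/- For $0<q<1$, integer $n \ge 0$ and $\beta_{n,\mu}$ as defined, the weighted trace identity $q^n \sum_{\mu=0}^n q^{-2\mu}\beta_{n,\mu}\, c^{*\mu}a^{*\,n-\mu}a^{n-\mu}c^{\mu} = q^n$ holds in $\mathcal{A}(SU_q(2))$; i.e., $\mathrm{Tr}\big(\mathfrak{p}^{(n)}\,\mathrm{diag}(q^{n-2\mu})_{\mu=0}^n\big) = q^n$ (the quantum trace of the projection $\mathfrak{p}^{(n)}$ equals $q^n$). -/

import Mathlib

/-- The coefficient `β_{n,μ}` of the monopole projection. -/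
noncomputable def betaCoef (q : ℝ) (n μ : ℕ) : ℝ :=
  q ^ (2 * μ) * ∏ j ∈ Finset.range μ,
    (1 - q ^ (-(2 * ((n : ℤ) - j)))) / (1 - q ^ (-(2 * ((j : ℤ) + 1))))

noncomputable def qtG (Q : ℝ) (n μ : ℕ) : ℝ :=
  ∏ j ∈ Finset.range μ, (1 - Q ^ (n - j)) / (1 - Q ^ (j + 1))

lemma qtG_zero (Q : ℝ) (n : ℕ) : qtG Q n 0 = 1 := by simp [qtG]

lemma qtG_top (Q : ℝ) (n : ℕ) : qtG Q n (n + 1) = 0 := by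
  apply Finset.prod_eq_zero (Finset.self_mem_range_succ n)
  simp

lemma qtG_pascal (Q : ℝ) (hQ : 1 < Q) (n μ : ℕ) (hμ : μ ≤ n) :
    qtG Q (n + 1) (μ + 1) = qtG Q n (μ + 1) + Q ^ (n - μ) * qtG Q n μ := by
  have hden : ∀ k : ℕ, (1 : ℝ) - Q ^ (k + 1) ≠ 0 := by
    intro k
    have : (1 : ℝ) < Q ^ (k + 1) := one_lt_pow₀ hQ (Nat.succ_ne_zero k)
    linarith
  have hsplit : ∀ m k : ℕ, qtG Q m k =
      (∏ j ∈ Finset.range k, (1 - Q ^ (m - j))) /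
        (∏ j ∈ Finset.range k, (1 - Q ^ (j + 1))) := by
    intro m k; simp [qtG, Finset.prod_div_distrib]
  have hDne : ∀ k : ℕ, (∏ j ∈ Finset.range k, ((1 : ℝ) - Q ^ (j + 1))) ≠ 0 :=
    fun k => Finset.prod_ne_zero_iff.mpr fun j _ => hden j
  have hnum1 : (∏ j ∈ Finset.range (μ + 1), ((1 : ℝ) - Q ^ (n + 1 - j)))
      = (1 - Q ^ (n + 1)) * ∏ j ∈ Finset.range μ, (1 - Q ^ (n - j)) := by
    rw [Finset.prod_range_succ']
    simp [Nat.add_sub_add_right, mul_comm]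
  have hpow : Q ^ (n - μ) * Q ^ (μ + 1) = Q ^ (n + 1) := by
    rw [← pow_add]; congr 1; omega
  rw [hsplit, hsplit, hsplit, Finset.prod_range_succ (f := fun j => (1:ℝ) - Q ^ (j+1)),
    hnum1, Finset.prod_range_succ (f := fun j => (1:ℝ) - Q ^ (n - j))]
  set N := ∏ j ∈ Finset.range μ, ((1:ℝ) - Q ^ (n - j)) with hN
  set D := ∏ j ∈ Finset.range μ, ((1:ℝ) - Q ^ (j + 1)) with hD
  have hD0 : D ≠ 0 := hDne μ
  have hd0 : (1:ℝ) - Q ^ (μ + 1) ≠ 0 := hden μ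
  field_simp
  linear_combination N * hpow

noncomputable def qtP {A : Type*} [Ring A] [Algebra ℝ A] (Q : ℝ) (x : A) : ℕ → A
  | 0 => 1
  | k + 1 => qtP Q x k * (1 - Q ^ k • x)

lemma qtP_commute {A : Type*} [Ring A] [Algebra ℝ A] (Q : ℝ) (x : A) :
    ∀ k : ℕ, Commute x (qtP Q x k)
  | 0 => Commute.one_right x
  | k + 1 => (qtP_commute Q x k).mul_right
      ((Commute.one_right x).sub_right ((Commute.refl x).smul_right _))

lemma qt_key {A : Type*} [Ring A] [Algebra ℝ A] (Q : ℝ) (hQ : 1 < Q) (x : A)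
    (G : ℕ → ℕ → ℝ) (hG0 : ∀ n, G n 0 = 1) (hGtop : ∀ n, G n (n + 1) = 0)
    (hGpas : ∀ n μ, μ ≤ n → G (n + 1) (μ + 1) = G n (μ + 1) + Q ^ (n - μ) * G n μ) :
    ∀ n : ℕ, ∑ μ ∈ Finset.range (n + 1), G n μ • (x ^ μ * qtP Q x (n - μ)) = 1 := by
  intro n
  induction n with
  | zero => simp [hG0, qtP]
  | succ n ih =>
    rw [Finset.sum_range_succ']
    have h0 : G (n + 1) 0 • (x ^ 0 * qtP Q x (n + 1 - 0)) = qtP Q x (n + 1) := by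
      simp [hG0]
    rw [h0]
    have hstep : ∀ μ ∈ Finset.range (n + 1),
        G (n + 1) (μ + 1) • (x ^ (μ + 1) * qtP Q x (n + 1 - (μ + 1)))
        = G n (μ + 1) • (x ^ (μ + 1) * qtP Q x (n - μ))
          + (Q ^ (n - μ) * G n μ) • (x ^ (μ + 1) * qtP Q x (n - μ)) := by
      intro μ hμ
      have hμn : μ ≤ n := Nat.lt_succ_iff.mp (Finset.mem_range.mp hμ)
      rw [show n + 1 - (μ + 1) = n - μ by omega, hGpas n μ hμn, add_smul]
    rw [Finset.sum_congr rfl hstep, Finset.sum_add_distrib, add_right_comm]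
    have hsum1 : (∑ μ ∈ Finset.range (n + 1),
          G n (μ + 1) • (x ^ (μ + 1) * qtP Q x (n - μ))) + qtP Q x (n + 1)
        = ∑ μ ∈ Finset.range (n + 1), G n μ • (x ^ μ * qtP Q x (n + 1 - μ)) := by
      have e1 := Finset.sum_range_succ' (fun μ =>
        G n μ • (x ^ μ * qtP Q x (n + 1 - μ))) (n + 1)
      have e2 := Finset.sum_range_succ (fun μ =>
        G n μ • (x ^ μ * qtP Q x (n + 1 - μ))) (n + 1)
      simp only [hG0, hGtop, zero_smul, add_zero, pow_zero, one_mul, one_smul,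
        Nat.sub_zero, Nat.add_sub_add_right, Nat.add_sub_cancel_left] at e1 e2
      rw [← e2, e1]
    rw [hsum1, ← Finset.sum_add_distrib]
    have hterm : ∀ μ ∈ Finset.range (n + 1),
        G n μ • (x ^ μ * qtP Q x (n + 1 - μ))
          + (Q ^ (n - μ) * G n μ) • (x ^ (μ + 1) * qtP Q x (n - μ))
        = G n μ • (x ^ μ * qtP Q x (n - μ)) := by
      intro μ hμ
      have hμn : μ ≤ n := Nat.lt_succ_iff.mp (Finset.mem_range.mp hμ)
      rw [show n + 1 - μ = (n - μ) + 1 by omega]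
      show G n μ • (x ^ μ * (qtP Q x (n - μ) * (1 - Q ^ (n - μ) • x))) + _ = _
      have hcomm : x ^ μ * (qtP Q x (n - μ) * (1 - Q ^ (n - μ) • x))
          = x ^ μ * qtP Q x (n - μ)
            - Q ^ (n - μ) • (x ^ (μ + 1) * qtP Q x (n - μ)) := by
        rw [mul_sub, mul_sub, mul_one]
        congr 1
        rw [mul_smul_comm, mul_smul_comm, ← (qtP_commute Q x (n - μ)).eq,
          ← mul_assoc, ← pow_succ]
      rw [hcomm, smul_sub, mul_comm (Q ^ (n - μ)), mul_smul]
      abel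
    rw [Finset.sum_congr rfl hterm, ih]

lemma qtP_commute_of {A : Type*} [Ring A] [Algebra ℝ A] (Q : ℝ) (x y : A)
    (h : Commute y x) : ∀ k : ℕ, Commute y (qtP Q x k)
  | 0 => Commute.one_right y
  | k + 1 => (qtP_commute_of Q x y h k).mul_right
      ((Commute.one_right y).sub_right (h.smul_right _))

theorem quantum_trace_of_projection (q : ℝ) (hq0 : 0 < q) (hq1 : q < 1)
    (A : Type*) [Ring A] [StarRing A] [Algebra ℝ A] [StarModule ℝ A]
    (a c : A)
    (h1 : a * c = q • (c * a))
    (h2 : a * star c = q • (star c * a))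
    (h3 : c * star c = star c * c)
    (h4 : star a * a + star c * c = 1)
    (h5 : a * star a + (q ^ 2) • (c * star c) = 1)
    (n : ℕ) :
    (∑ μ ∈ Finset.range (n + 1),
        (q ^ (n : ℤ) * q ^ (-(2 * (μ : ℤ))) * betaCoef q n μ) •
          ((star c) ^ μ * (star a) ^ (n - μ) * a ^ (n - μ) * c ^ μ))
      = (q ^ (n : ℤ)) • (1 : A) := by
  have hq0' : q ≠ 0 := ne_of_gt hq0
  set x : A := star c * c with hxdef
  set Q : ℝ := q ^ (-2 : ℤ) with hQdef
  have hQinv : Q = (q ^ 2)⁻¹ := by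
    rw [hQdef, show (-2 : ℤ) = -((2 : ℕ) : ℤ) by norm_num, zpow_neg, zpow_natCast]
  have hQ1 : 1 < Q := by
    rw [hQinv]
    have h2' : (0 : ℝ) < q ^ 2 := by positivity
    have h2'' : q ^ 2 < 1 := by nlinarith
    exact (one_lt_inv₀ h2').mpr h2''
  have hQq : Q * q ^ 2 = 1 := by
    rw [hQinv]; field_simp
  -- starred relations
  have hca : c * star a = q • (star a * c) := by
    have := congrArg star h2
    simpa [star_mul, mul_comm] using this
  have hcsa : star c * star a = q • (star a * star c) := by
    have := congrArg star h1
    simpa [star_mul, mul_comm] using this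
  have h4' : star a * a = 1 - x := by rw [hxdef, eq_sub_of_add_eq h4]
  -- commutation of x with c, star c
  have hc_x : Commute c x := by
    show c * x = x * c
    rw [hxdef, ← mul_assoc, h3]
  have hsc_x : Commute (star c) x := by
    show star c * x = x * star c
    rw [hxdef, mul_assoc, h3]
  -- a and x
  have hax : a * x = (q * q) • (x * a) := by
    rw [hxdef]
    calc a * (star c * c) = (a * star c) * c := by rw [mul_assoc]
      _ = (q • (star c * a)) * c := by rw [h2]
      _ = q • (star c * (a * c)) := by rw [smul_mul_assoc, mul_assoc]
      _ = q • (star c * (q • (c * a))) := by rw [h1]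
      _ = (q * q) • (star c * c * a) := by
          rw [mul_smul_comm, smul_smul, mul_assoc]
  have hxa : x * a = Q • (a * x) := by
    have : Q • (a * x) = x * a := by
      rw [hax, smul_smul, show Q * (q * q) = 1 by rw [← hQq]; ring, one_smul]
    exact this.symm
  -- moving (1 - r • x) through powers of a
  have hsingle : ∀ r : ℝ, (1 - r • x) * a = a * (1 - (r * Q) • x) := by
    intro r
    rw [sub_mul, one_mul, mul_sub, mul_one]
    congr 1
    rw [smul_mul_assoc, hxa, smul_smul, mul_smul_comm]
  have hmove : ∀ (k : ℕ) (r : ℝ), (1 - r • x) * a ^ k = a ^ k * (1 - (r * Q ^ k) • x) := by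
    intro k
    induction k with
    | zero => intro r; simp
    | succ k ih =>
      intro r
      rw [pow_succ' a k, ← mul_assoc, hsingle r, mul_assoc, ih (r * Q), ← mul_assoc,
        ← pow_succ' a k, mul_assoc, pow_succ]
      ring_nf
  -- (star a)^k * a^k = qtP
  have hpowaa : ∀ k : ℕ, (star a) ^ k * a ^ k = qtP Q x k := by
    intro k
    induction k with
    | zero => simp [qtP]
    | succ k ih =>
      rw [pow_succ (star a) k, pow_succ' a k, mul_assoc, ← mul_assoc (star a) a (a ^ k),
        h4', show (1 : A) - x = 1 - (1 : ℝ) • x by rw [one_smul], hmove k 1, one_mul,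
        ← mul_assoc, ih]
      simp [qtP]
  -- (star c)^μ * c^μ = x^μ
  have hscc : ∀ μ : ℕ, (star c) ^ μ * c ^ μ = x ^ μ := by
    intro μ
    induction μ with
    | zero => simp
    | succ μ ih =>
      rw [pow_succ (star c) μ, pow_succ' c μ, mul_assoc, ← mul_assoc (star c) c (c ^ μ),
        ← hxdef, ← mul_assoc, (hsc_x.pow_left μ).eq, mul_assoc, ih, ← pow_succ' x μ]
  -- the main term computation
  have hterm : ∀ μ ∈ Finset.range (n + 1),
      (star c) ^ μ * (star a) ^ (n - μ) * a ^ (n - μ) * c ^ μ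
        = x ^ μ * qtP Q x (n - μ) := by
    intro μ _
    rw [mul_assoc ((star c) ^ μ) ((star a) ^ (n - μ)) (a ^ (n - μ)), hpowaa,
      ((qtP_commute_of Q x (star c) hsc_x (n - μ)).pow_left μ).eq, mul_assoc, hscc,
      ((qtP_commute_of Q x x (Commute.refl x) (n - μ)).pow_left μ).symm.eq]
  -- coefficient computation
  have hcoef : ∀ μ ∈ Finset.range (n + 1),
      q ^ (n : ℤ) * q ^ (-(2 * (μ : ℤ))) * betaCoef q n μ = q ^ n * qtG Q n μ := by
    intro μ hμ
    have hμn : μ ≤ n := Nat.lt_succ_iff.mp (Finset.mem_range.mp hμ)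
    have hprod : (∏ j ∈ Finset.range μ,
        ((1 - q ^ (-(2 * ((n : ℤ) - j)))) / (1 - q ^ (-(2 * ((j : ℤ) + 1))))))
        = qtG Q n μ := by
      simp only [qtG]
      apply Finset.prod_congr rfl
      intro j hj
      have hjn : j ≤ n := le_trans (Nat.le_of_lt_succ (Nat.lt_succ_of_lt
        (lt_of_lt_of_le (Finset.mem_range.mp hj) hμn))) (le_refl n)
      have e1 : q ^ (-(2 * ((n : ℤ) - j))) = Q ^ (n - j) := by
        rw [show (-(2 * ((n : ℤ) - j))) = (-2) * ((n - j : ℕ) : ℤ) by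
          push_cast [Nat.cast_sub hjn]; ring, zpow_mul, zpow_natCast, hQdef]
      have e2 : q ^ (-(2 * ((j : ℤ) + 1))) = Q ^ (j + 1) := by
        rw [show (-(2 * ((j : ℤ) + 1))) = (-2) * ((j + 1 : ℕ) : ℤ) by push_cast; ring,
          zpow_mul, zpow_natCast, hQdef]
      rw [e1, e2]
    have hone : q ^ (-(2 * (μ : ℤ))) * q ^ (2 * μ) = 1 := by
      rw [← zpow_natCast q (2 * μ), ← zpow_add₀ hq0']
      norm_num
    rw [betaCoef, hprod, zpow_natCast]
    linear_combination (q ^ n * qtG Q n μ) * hone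
  -- assemble
  have hmain : ∀ μ ∈ Finset.range (n + 1),
      (q ^ (n : ℤ) * q ^ (-(2 * (μ : ℤ))) * betaCoef q n μ) •
          ((star c) ^ μ * (star a) ^ (n - μ) * a ^ (n - μ) * c ^ μ)
        = q ^ n • (qtG Q n μ • (x ^ μ * qtP Q x (n - μ))) := by
    intro μ hμ
    rw [hcoef μ hμ, hterm μ hμ, mul_smul]
  rw [Finset.sum_congr rfl hmain, ← Finset.smul_sum,
    qt_key Q hQ1 x (qtG Q) (qtG_zero Q) (qtG_top Q)
      (fun n μ h => qtG_pascal Q hQ1 n μ h) n, zpow_natCast]
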